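/- Let d, m ∈ ℕ, let O ⊆ ℝ^d be an open set, let 𝒪 ⊆ O be a convex set, let T ∈ (0, ∞), p ∈ [2, ∞), δ ∈ (0, ∞), q₀, q₁ ∈ (0, ∞], α₀, α₁ ∈ [0, ∞), let φ : [0, T] → [0, ∞), V₀ : O → [0, ∞), and V̄ : [0, T] × 𝒪 → ℝ be functions, let μ : O → ℝ^d be continuously Fréchet differentiable and let σ : O → M_{d×m}(ℝ) (d×m real matrices with the Frobenius norm ‖·‖_F) be continuously Fréchet differentiable with Fréchet derivatives μ' and σ'. Assume that for all t ∈ [0, T), all x, y ∈ 𝒪, and all h ∈ ℝ^d \ {0} it holds that ⟨h, (∫₀¹ μ'(λx + (1−λ)y) dλ) h⟩ + δ‖h‖² + ((1+δ)/2) ‖(∫₀¹ σ'(λx + (1−λ)y) dλ) h‖_F² + (p − 1 + pδ) ‖((∫₀¹ σ'(λx + (1−λ)y) dλ) h)ᵀ h‖² / ‖h‖² ≤ ‖h‖² ( φ(t) + (V₀(x) + V₀(y)) / (2 q₀ T e^{α₀ t}) + (V̄(t, x) + V̄(t, y)) / (2 q₁ e^{α₁ t}) ). Then for all t ∈ [0,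 T) and all x, y ∈ 𝒪 with x ≠ y it holds that ⟨x − y, μ(x) − μ(y)⟩ + (1/2) ‖σ(x) − σ(y)‖_F² + (p − 1 + pδ) ‖(σ(x) − σ(y))ᵀ (x − y)‖² / ‖x − y‖² ≤ ‖x − y‖² ( φ(t) + (V₀(x) + V₀(y)) / (2 q₀ T e^{α₀ t}) + (V̄(t, x) + V̄(t, y)) / (2 q₁ e^{α₁ t}) ). -/

import Mathlib

open scoped BigOperators RealInnerProductSpace ENNReal NNReal

attribute [local instance] Matrix.frobeniusNormedAddCommGroup Matrix.frobeniusNormedSpace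

/-- The operator-norm group structure on `ℝ^d →L[ℝ] M_{d×m}(ℝ)` (Frobenius norm on the target),
which instance search no longer finds by itself. -/
noncomputable def frobeniusCLMNormedAddCommGroup (d m : ℕ) :
    NormedAddCommGroup (EuclideanSpace ℝ (Fin d) →L[ℝ] Matrix (Fin d) (Fin m) ℝ) :=
  ContinuousLinearMap.toNormedAddCommGroup

attribute [local instance] frobeniusCLMNormedAddCommGroup

/-- The corresponding normed-space structure, likewise no longer found by instance search. -/
noncomputable def frobeniusCLMNormedSpace (d m : ℕ) :
    NormedSpace ℝ (EuclideanSpace ℝ (Fin d) →L[ℝ] Matrix (Fin d) (Fin m) ℝ) :=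
  ContinuousLinearMap.toNormedSpace

attribute [local instance] frobeniusCLMNormedSpace

lemma segment_ftc_aux {E F : Type*} [NormedAddCommGroup E] [NormedSpace ℝ E]
    [NormedAddCommGroup F] [NormedSpace ℝ F] [CompleteSpace F]
    (O : Set E)
    (f : E → F) (f' : E → (E →L[ℝ] F))
    (hf : ∀ z ∈ O, HasFDerivAt f (f' z) z) (hf'c : ContinuousOn f' O)
    (x y : E) (hseg : ∀ l ∈ Set.Icc (0:ℝ) 1, l • x + (1 - l) • y ∈ O) :
    f x - f y = (∫ l in (0:ℝ)..1, f' (l • x + (1 - l) • y)) (x - y) := by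
  set γ : ℝ → E := fun l => l • x + (1 - l) • y with hγ
  have hγcont : Continuous γ := by
    apply Continuous.add
    · exact continuous_id.smul continuous_const
    · exact (continuous_const.sub continuous_id).smul continuous_const
  have hcont : ContinuousOn (fun l => f' (γ l)) (Set.Icc (0:ℝ) 1) :=
    hf'c.comp hγcont.continuousOn (fun l hl => hseg l hl)
  have hint : IntervalIntegrable (fun l => f' (γ l)) MeasureTheory.volume 0 1 := by
    apply ContinuousOn.intervalIntegrable
    rwa [Set.uIcc_of_le zero_le_one]
  have hγderiv : ∀ l : ℝ, HasDerivAt γ (x - y) l := by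
    intro l
    have heq : γ = fun l : ℝ => y + l • (x - y) := by
      funext l
      simp only [hγ]
      module
    rw [heq]
    simpa using (((hasDerivAt_id l).smul_const (x - y)).const_add y)
  have hcomp : ∀ l ∈ Set.uIcc (0:ℝ) 1,
      HasDerivAt (fun l => f (γ l)) (f' (γ l) (x - y)) l := by
    intro l hl
    rw [Set.uIcc_of_le zero_le_one] at hl
    exact (hf _ (hseg l hl)).comp_hasDerivAt l (hγderiv l)
  have hint2 : IntervalIntegrable (fun l => f' (γ l) (x - y)) MeasureTheory.volume 0 1 := by
    apply ContinuousOn.intervalIntegrable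
    rw [Set.uIcc_of_le zero_le_one]
    exact ((ContinuousLinearMap.apply ℝ F (x - y)).continuous.comp_continuousOn hcont)
  have hftc := intervalIntegral.integral_eq_sub_of_hasDerivAt hcomp hint2
  have happ := ContinuousLinearMap.intervalIntegral_apply (v := x - y) hint
  rw [happ, hftc]
  simp [hγ]

/-- Lemma 4.2 of the paper (finite-dimensional setting): if the coefficient functions
`μ : O → ℝ^d` and `σ : O → M_{d×m}(ℝ)` are continuously Fréchet differentiable with
derivatives `μ'`, `σ'`, and the derivative-level local monotonicity condition holds on the
convex set `𝒪 ⊆ O`, then the corresponding increment-level monotonicity condition holds.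
Here `q₀, q₁ ∈ (0, ∞]` (so that the corresponding terms vanish when `qᵢ = ∞`, via
`ENNReal.toReal` and the convention `a / 0 = 0` in `ℝ`), the Frobenius norm is written
out as a sum of squares of entries, and `Aᵀ Y` as the vector `j ↦ ∑ i, A i j * Y i`. -/
theorem increment_monotonicity_of_derivative_monotonicity
    (d m : ℕ)
    (O : Set (EuclideanSpace ℝ (Fin d))) (hO : IsOpen O)
    (𝒪 : Set (EuclideanSpace ℝ (Fin d))) (h𝒪O : 𝒪 ⊆ O) (h𝒪conv : Convex ℝ 𝒪)
    (T p δ : ℝ) (hT : 0 < T) (hp : 2 ≤ p) (hδ : 0 < δ)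
    (q₀ q₁ : ℝ≥0∞) (hq₀ : 0 < q₀) (hq₁ : 0 < q₁)
    (α₀ α₁ : ℝ) (hα₀ : 0 ≤ α₀) (hα₁ : 0 ≤ α₁)
    (φ : ℝ → ℝ) (hφ : ∀ t ∈ Set.Icc (0 : ℝ) T, 0 ≤ φ t)
    (V₀ : EuclideanSpace ℝ (Fin d) → ℝ) (hV₀ : ∀ x ∈ O, 0 ≤ V₀ x)
    (Vbar : ℝ → EuclideanSpace ℝ (Fin d) → ℝ)
    (μ : EuclideanSpace ℝ (Fin d) → EuclideanSpace ℝ (Fin d))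
    (μ' : EuclideanSpace ℝ (Fin d) →
      (EuclideanSpace ℝ (Fin d) →L[ℝ] EuclideanSpace ℝ (Fin d)))
    (σ : EuclideanSpace ℝ (Fin d) → Matrix (Fin d) (Fin m) ℝ)
    (σ' : EuclideanSpace ℝ (Fin d) →
      (EuclideanSpace ℝ (Fin d) →L[ℝ] Matrix (Fin d) (Fin m) ℝ))
    (hμ : ∀ z ∈ O, HasFDerivAt μ (μ' z) z) (hμ'c : ContinuousOn μ' O)
    (hσ : ∀ z ∈ O, HasFDerivAt σ (σ' z) z) (hσ'c : ContinuousOn σ' O)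
    (hyp : ∀ t ∈ Set.Ico (0 : ℝ) T, ∀ x ∈ 𝒪, ∀ y ∈ 𝒪,
      ∀ h : EuclideanSpace ℝ (Fin d), h ≠ 0 →
      ⟪h, (∫ l in (0:ℝ)..1, μ' (l • x + (1 - l) • y)) h⟫ + δ * ‖h‖ ^ 2
        + ((1 + δ) / 2) *
            (∑ i : Fin d, ∑ j : Fin m,
              (((∫ l in (0:ℝ)..1, σ' (l • x + (1 - l) • y)) h) i j) ^ 2)
        + (p - 1 + p * δ) *
            (∑ j : Fin m, (∑ i : Fin d,
              ((∫ l in (0:ℝ)..1, σ' (l • x + (1 - l) • y)) h) i j * h i) ^ 2) / ‖h‖ ^ 2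
      ≤ ‖h‖ ^ 2 * (φ t + (V₀ x + V₀ y) / (2 * q₀.toReal * T * Real.exp (α₀ * t))
          + (Vbar t x + Vbar t y) / (2 * q₁.toReal * Real.exp (α₁ * t)))) :
    ∀ t ∈ Set.Ico (0 : ℝ) T, ∀ x ∈ 𝒪, ∀ y ∈ 𝒪, x ≠ y →
      ⟪x - y, μ x - μ y⟫
        + (1 / 2) * (∑ i : Fin d, ∑ j : Fin m, ((σ x - σ y) i j) ^ 2)
        + (p - 1 + p * δ) *
            (∑ j : Fin m, (∑ i : Fin d, (σ x - σ y) i j * (x - y) i) ^ 2) / ‖x - y‖ ^ 2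
      ≤ ‖x - y‖ ^ 2 * (φ t + (V₀ x + V₀ y) / (2 * q₀.toReal * T * Real.exp (α₀ * t))
          + (Vbar t x + Vbar t y) / (2 * q₁.toReal * Real.exp (α₁ * t))) := by
  intro t ht x hx y hy hxy
  have hseg : ∀ l ∈ Set.Icc (0:ℝ) 1, l • x + (1 - l) • y ∈ O := by
    intro l hl
    exact h𝒪O (h𝒪conv hx hy hl.1 (by linarith [hl.2]) (by ring))
  have hμeq := segment_ftc_aux O μ μ' hμ hμ'c x y hseg
  have hσeq : σ x - σ y = (∫ l in (0:ℝ)..1, σ' (l • x + (1 - l) • y)) (x - y) :=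
    segment_ftc_aux O σ σ' hσ hσ'c x y hseg
  have key := hyp t ht x hx y hy (x - y) (sub_ne_zero.mpr hxy)
  rw [← hμeq, ← hσeq] at key
  have hS : (0:ℝ) ≤ ∑ i : Fin d, ∑ j : Fin m, ((σ x - σ y) i j) ^ 2 := by
    apply Finset.sum_nonneg; intro i _; apply Finset.sum_nonneg; intro j _; positivity
  have hn : (0:ℝ) ≤ ‖x - y‖ ^ 2 := by positivity
  nlinarith [mul_nonneg hδ.le hn, mul_nonneg hδ.le hS]
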